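/- There exist no integers x, y, z₁, z₂, z₃ such that −2x² − 2y² − 2(z₁²+z₂²+z₃²) + 6xy + (4x+2y)(z₁+z₂+z₃) = 0 and 1 ≤ 7x + 4y + z₁ + z₂ + z₃ ≤ 4. -/
import Mathlib


/-- Proposition 4.5: no class `D` in the lattice `𝕃` with `D² = 0` and `1 ≤ D·C ≤ 4`. -/
theorem stmt_9 :
    ¬ ∃ x y z₁ z₂ z₃ : ℤ,
      -2 * x ^ 2 - 2 * y ^ 2 - 2 * (z₁ ^ 2 + z₂ ^ 2 + z₃ ^ 2) + 6 * x * y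
        + (4 * x + 2 * y) * (z₁ + z₂ + z₃) = 0 ∧
      1 ≤ 7 * x + 4 * y + z₁ + z₂ + z₃ ∧ 7 * x + 4 * y + z₁ + z₂ + z₃ ≤ 4 := by
  rintro ⟨x, y, z₁, z₂, z₃, hQ, h1, h2⟩
  set d : ℤ := 7 * x + 4 * y + z₁ + z₂ + z₃ with hd
  have key : 18424 * ((z₁ - z₂) ^ 2 + (z₁ - z₃) ^ 2 + (z₂ - z₃) ^ 2)
      + (94 * (14 * x - d) + 46 * (14 * y - d)) ^ 2 + 798 * (14 * y - d) ^ 2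
      = 1974 * d ^ 2 := by
    rw [hd]; linear_combination (-27636 : ℤ) * hQ
  have hd2 : d ^ 2 ≤ 16 := by nlinarith
  have hB2 : (14 * y - d) ^ 2 ≤ 39 := by
    nlinarith [sq_nonneg (z₁ - z₂), sq_nonneg (z₁ - z₃), sq_nonneg (z₂ - z₃),
      sq_nonneg (94 * (14 * x - d) + 46 * (14 * y - d))]
  have hB : -6 ≤ 14 * y - d ∧ 14 * y - d ≤ 6 := by
    constructor <;> nlinarith [sq_nonneg (14 * y - d)]
  have hy : y = 0 := by omega
  subst hy
  have hA2 : (94 * (14 * x - d) + 46 * (14 * 0 - d)) ^ 2 ≤ 18816 := by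
    nlinarith [sq_nonneg (z₁ - z₂), sq_nonneg (z₁ - z₃), sq_nonneg (z₂ - z₃),
      sq_nonneg (14 * 0 - d)]
  have hA : -137 ≤ 94 * (14 * x - d) + 46 * (14 * 0 - d) ∧
      94 * (14 * x - d) + 46 * (14 * 0 - d) ≤ 137 := by
    constructor <;> nlinarith [sq_nonneg (94 * (14 * x - d) + 46 * (14 * 0 - d))]
  have h3 : 3 ≤ 1316 * x := by linarith [hA.1]
  have h4 : 1316 * x ≤ 697 := by linarith [hA.2]
  omega
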